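/- Let g : ℝ → ℝ be a continuous map satisfying g(x+1) = g(x) + 2 for all x ∈ ℝ and g(b) − g(a) > b − a for all real numbers a < b. Then for all real numbers a < b there exists an integer n ≥ 1 such that gⁿ(b) − gⁿ(a) ≥ 1, where gⁿ denotes the n-th iterate of g. (Consequently the induced degree-two circle map sends every nondegenerate arc of ℝ/ℤ onto the full circle after finitely many iterates.) -/
import Mathlib

/-- Uniform expansion by at least `m` for arcs of a fixed length `d`. -/
lemma uniform_gap (g : ℝ → ℝ) (hg : Continuous g)
    (hlift : ∀ x : ℝ, g (x + 1) = g x + 2)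
    (hexp : ∀ a b : ℝ, a < b → b - a < g b - g a)
    (d : ℝ) (hd : 0 < d) :
    ∃ m > 0, ∀ x : ℝ, d + m ≤ g (x + d) - g x := by
  set h : ℝ → ℝ := fun t => g (t + d) - g t - d with hh
  have hco : Continuous h := ((hg.comp (continuous_id.add continuous_const)).sub hg).sub
    continuous_const
  have hper : Function.Periodic h 1 := by
    intro t
    simp only [hh]
    have : t + 1 + d = t + d + 1 := by ring
    rw [this, hlift, hlift]
    ring
  have hpos : ∀ t, 0 < h t := by
    intro t
    have := hexp t (t + d) (by linarith)
    simp only [hh]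
    linarith
  obtain ⟨t0, ht0, hmin⟩ := (isCompact_Icc (a := (0:ℝ)) (b := 1)).exists_isMinOn
    (Set.nonempty_Icc.mpr zero_le_one) hco.continuousOn
  refine ⟨h t0, hpos t0, fun x => ?_⟩
  have hfr : h (Int.fract x) = h x := by
    have := hper.sub_int_mul_eq (x := x) (n := ⌊x⌋)
    simpa [Int.fract, sub_eq_add_neg] using this
  have hmem : Int.fract x ∈ Set.Icc (0:ℝ) 1 :=
    ⟨Int.fract_nonneg x, le_of_lt (Int.fract_lt_one x)⟩
  have h2 : h t0 ≤ h (Int.fract x) := hmin hmem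
  simp only [hh] at h2 hfr ⊢
  linarith

/-- For a lift `g` of a degree-two circle map which strictly increases
the length of every arc, every arc grows to length at least one after finitely many
iterates; hence the induced circle map eventually maps every nondegenerate arc onto
the whole circle. -/
theorem arc_grows_to_full_circle
    (g : ℝ → ℝ) (hg : Continuous g)
    (hlift : ∀ x : ℝ, g (x + 1) = g x + 2)
    (hexp : ∀ a b : ℝ, a < b → b - a < g b - g a) :
    ∀ a b : ℝ, a < b → ∃ n : ℕ, 1 ≤ n ∧ 1 ≤ g^[n] b - g^[n] a := by
  intro a b hab
  set d := b - a with hd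
  have hd0 : 0 < d := by simp [hd]; linarith
  obtain ⟨m, hm0, hm⟩ := uniform_gap g hg hlift hexp d hd0
  -- key induction: g^[n] b - g^[n] a ≥ d + n * m
  have key : ∀ n : ℕ, d + n * m ≤ g^[n] b - g^[n] a := by
    intro n
    induction n with
    | zero => simp [hd]
    | succ k ih =>
      set x := g^[k] a
      set y := g^[k] b
      have hxy : x + d ≤ y := by
        have : (0:ℝ) ≤ k * m := by positivity
        simp only [x, y]; linarith
      have h1 : d + m ≤ g (x + d) - g x := hm x
      have h2 : g (x + d) ≤ g y := by
        rcases eq_or_lt_of_le hxy with heq | hlt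
        · rw [heq]
        · have := hexp (x + d) y hlt
          linarith
      have hiter : g^[k+1] a = g x ∧ g^[k+1] b = g y := by
        constructor <;> simp [Function.iterate_succ_apply', x, y]
      have h3 : y - x - d ≤ g y - g (x + d) := by
        rcases eq_or_lt_of_le hxy with heq | hlt
        · rw [heq]; simp; linarith
        · have := hexp (x + d) y hlt
          linarith
      push_cast
      rw [hiter.1, hiter.2]
      linarith
  obtain ⟨n, hn⟩ := Archimedean.arch (1 - d) hm0
  refine ⟨n + 1, by omega, ?_⟩
  have := key (n + 1)
  have hle : 1 - d ≤ n * m := by simpa [nsmul_eq_mul] using hn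
  push_cast at this
  nlinarith
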